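/- Let A = Mₙ(ℂ) and let h be an algebra automorphism of A. Then there exists an invertible element γ ∈ A such that h(a) = γ a γ⁻¹ for all a ∈ A. -/

import Mathlib

open Matrix

/-- Skolem–Noether for matrix algebras: every ℂ-algebra automorphism of Mₙ(ℂ)
is inner, i.e. given by conjugation by some invertible matrix γ. -/
theorem matrix_algebra_automorphism_is_inner (n : ℕ)
    (h : Matrix (Fin n) (Fin n) ℂ ≃ₐ[ℂ] Matrix (Fin n) (Fin n) ℂ) :
    ∃ γ : (Matrix (Fin n) (Fin n) ℂ)ˣ,
      ∀ a : Matrix (Fin n) (Fin n) ℂ,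
        h a = (γ : Matrix (Fin n) (Fin n) ℂ) * a * ((γ⁻¹ : (Matrix (Fin n) (Fin n) ℂ)ˣ) : Matrix (Fin n) (Fin n) ℂ) := by
  rcases Nat.eq_zero_or_pos n with rfl | hn
  · exact ⟨1, fun a => Subsingleton.elim _ _⟩
  have i0 : Fin n := ⟨0, hn⟩
  set E : Fin n → Fin n → Matrix (Fin n) (Fin n) ℂ := fun i j => Matrix.single i j 1 with hE
  have hEmul : ∀ i j k l, E i j * E k l = if j = k then E i l else 0 := by
    intro i j k l
    by_cases hjk : j = k
    · subst hjk; simp [hE]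
    · simp [hE, hjk]
  have hne : h (E i0 i0) ≠ 0 := by
    intro hc
    have h0 : E i0 i0 = 0 := h.injective (by simpa using hc)
    have := congrFun (congrFun h0 i0) i0
    simp [hE, Matrix.single] at this
  obtain ⟨w, hw⟩ : ∃ w, h (E i0 i0) *ᵥ w ≠ 0 := by
    by_contra hc
    push_neg at hc
    apply hne
    ext i j
    have := congrFun (hc (Pi.single j 1)) i
    simpa [mulVec_single] using this
  set u : Fin n → ℂ := h (E i0 i0) *ᵥ w with hu
  have hEu : h (E i0 i0) *ᵥ u = u := by
    rw [hu, mulVec_mulVec, ← _root_.map_mul, hEmul]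
    simp
  set γ : Matrix (Fin n) (Fin n) ℂ := Matrix.of fun i j => (h (E j i0) *ᵥ u) i with hγ
  have hcol : ∀ (M : Matrix (Fin n) (Fin n) ℂ) k i,
      (M * γ) i k = (M *ᵥ (h (E k i0) *ᵥ u)) i := by
    intro M k i
    simp [mul_apply, mulVec, dotProduct, hγ]
  -- intertwining on basis elements
  have keyb : ∀ p q (c : ℂ), h (Matrix.single p q c) * γ = γ * Matrix.single p q c := by
    intro p q c
    ext i k
    rw [hcol, mulVec_mulVec, ← _root_.map_mul]
    have h1 : Matrix.single p q c * E k i0 = if q = k then c • E p i0 else 0 := by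
      by_cases hqk : q = k
      · subst hqk
        rw [if_pos rfl]
        rw [show Matrix.single p q c = c • E p q by simp [hE, smul_single]]
        rw [smul_mul_assoc, hEmul]
        simp
      · rw [if_neg hqk]
        rw [show Matrix.single p q c = c • E p q by simp [hE, smul_single]]
        rw [smul_mul_assoc, hEmul, if_neg hqk, smul_zero]
    rw [h1]
    by_cases hqk : q = k
    · subst hqk
      rw [if_pos rfl, _root_.map_smul, smul_mulVec]
      simp only [mul_apply, Matrix.single, of_apply, Pi.smul_apply, smul_eq_mul]
      rw [Finset.sum_eq_single p (by intro b _ hb; simp [Ne.symm hb]) (by simp)]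
      simp [hγ, mul_comm]
    · rw [if_neg hqk, map_zero, zero_mulVec]
      simp only [mul_apply, Matrix.single, of_apply]
      rw [Finset.sum_eq_zero]
      · simp
      · intro b _
        simp [hqk]
  have key : ∀ a, h a * γ = γ * a := by
    intro a
    conv_lhs => rw [matrix_eq_sum_single a]
    conv_rhs => rw [matrix_eq_sum_single a]
    rw [map_sum, Finset.sum_mul, Finset.mul_sum]
    refine Finset.sum_congr rfl fun p _ => ?_
    rw [map_sum, Finset.sum_mul, Finset.mul_sum]
    exact Finset.sum_congr rfl fun q _ => keyb p q (a p q)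
  -- γ acts on vectors with trivial kernel
  have hγv : ∀ (c : Fin n → ℂ) i, h (E i0 i) *ᵥ (γ *ᵥ c) = c i • u := by
    intro c i
    rw [mulVec_mulVec, key (E i0 i), ← mulVec_mulVec]
    have h2 : E i0 i *ᵥ c = Pi.single i0 (c i) := by
      ext j
      simp [hE, mulVec, dotProduct, Matrix.single, Pi.single_apply]
      by_cases hj : i0 = j <;> simp [hj, eq_comm]
    rw [h2, mulVec_single]
    ext j
    have : γ j i0 = u j := by
      simp only [hγ, of_apply]
      rw [hEu]
    simp [this, mul_comm]
  have hinj : Function.Injective γ.mulVec := by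
    intro x y hxy
    have hc : γ *ᵥ (x - y) = 0 := by
      rw [mulVec_sub, hxy, sub_self]
    have : ∀ i, (x - y) i = 0 := by
      intro i
      have := hγv (x - y) i
      rw [hc, mulVec_zero] at this
      rcases smul_eq_zero.mp this.symm with h0 | h0
      · exact h0
      · exact absurd h0 hw
    funext i
    have hi := this i
    simpa [sub_eq_zero] using hi
  have hUnit : IsUnit γ := mulVec_injective_iff_isUnit.mp hinj
  refine ⟨hUnit.unit, fun a => ?_⟩
  have hg : (hUnit.unit : Matrix (Fin n) (Fin n) ℂ) = γ := hUnit.unit_spec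
  have h1 : γ * ((hUnit.unit⁻¹ : (Matrix (Fin n) (Fin n) ℂ)ˣ) : Matrix (Fin n) (Fin n) ℂ) = 1 := by
    have h2 := hUnit.unit.mul_inv
    rwa [hg] at h2
  rw [hg, ← key a, mul_assoc, h1, mul_one]
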